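/- Let H = [[H_pp, H_pq],[H_qp, H_qq]] : I → M_{2n}(ℂ) be continuous and symmetric-valued on an interval I containing 0, let S : I → M_{2n}(ℂ) solve Ṡ = ΩHS with S(0) = I, and let B₀ be complex symmetric with positive definite imaginary part. Suppose that on a subinterval [0,T) the matrix S_qp(t)B₀ + S_qq(t) is invertible, and set B(t) := (S_pp(t)B₀ + S_pq(t))(S_qp(t)B₀ + S_qq(t))⁻¹. Then B(t) is differentiable on [0,T) and satisfies the matrix Riccati equation Ḃ = −H_qp B − B H_pq − H_qq − B H_pp B, with B(0) = B₀. -/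

import Mathlib

open Matrix

noncomputable section

/-- The standard symplectic matrix `Ω = [[0, −I],[I, 0]]` on `ℝ²ⁿ`. -/
def Omg (n : ℕ) : Matrix (Fin n ⊕ Fin n) (Fin n ⊕ Fin n) ℝ :=
  fromBlocks 0 (-1) 1 0

/-- The complexification of `Ω`. -/
def OmgC (n : ℕ) : Matrix (Fin n ⊕ Fin n) (Fin n ⊕ Fin n) ℂ :=
  (Omg n).map Complex.ofReal

/-- Componentwise imaginary part of a complex matrix. -/
def matIm {m k : Type*} (A : Matrix m k ℂ) : Matrix m k ℝ := A.map Complex.im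

section Aux

attribute [local instance] Matrix.linftyOpNormedRing Matrix.linftyOpNormedAlgebra

variable {m : Type*} [Fintype m] [DecidableEq m]

theorem matrix_sum_smul (A : Matrix m m ℂ) :
    ∑ p : m × m, A p.1 p.2 • Matrix.single p.1 p.2 (1 : ℂ) = A := by
  rw [Fintype.sum_prod_type]
  conv_rhs => rw [matrix_eq_sum_single A]
  simp [smul_single]

theorem hasDerivWithinAt_matrix {f : ℝ → Matrix m m ℂ}
    {f' : Matrix m m ℂ} {s : Set ℝ} {t : ℝ}
    (h : ∀ i j, HasDerivWithinAt (fun x => f x i j) (f' i j) s t) :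
    HasDerivWithinAt f f' s t := by
  have h1 : HasDerivWithinAt
      (fun x => ∑ p : m × m, f x p.1 p.2 • Matrix.single p.1 p.2 (1 : ℂ))
      (∑ p : m × m, f' p.1 p.2 • Matrix.single p.1 p.2 (1 : ℂ)) s t :=
    HasDerivWithinAt.fun_sum fun p _ => (h p.1 p.2).smul_const _
  simpa only [matrix_sum_smul] using h1

theorem hasDerivWithinAt_entry {f : ℝ → Matrix m m ℂ}
    {f' : Matrix m m ℂ} {s : Set ℝ} {t : ℝ}
    (h : HasDerivWithinAt f f' s t) (i j : m) :
    HasDerivWithinAt (fun x => f x i j) (f' i j) s t := by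
  have h2 := (LinearMap.toContinuousLinearMap
    (Matrix.entryLinearMap ℝ ℂ i j)).hasFDerivAt.comp_hasDerivWithinAt t h
  exact h2

theorem OmgC_eq (n : ℕ) : OmgC n = fromBlocks 0 (-1) 1 0 := by
  unfold OmgC Omg
  ext (i | i) (j | j) <;>
    simp [Matrix.fromBlocks, Matrix.one_apply, apply_ite Complex.ofReal]

theorem omgC_mul_mul (n : ℕ) (Hm Sm : Matrix (Fin n ⊕ Fin n) (Fin n ⊕ Fin n) ℂ) :
    OmgC n * Hm * Sm = fromBlocks
      (-(Hm.toBlocks₂₁ * Sm.toBlocks₁₁) - Hm.toBlocks₂₂ * Sm.toBlocks₂₁)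
      (-(Hm.toBlocks₂₁ * Sm.toBlocks₁₂) - Hm.toBlocks₂₂ * Sm.toBlocks₂₂)
      (Hm.toBlocks₁₁ * Sm.toBlocks₁₁ + Hm.toBlocks₁₂ * Sm.toBlocks₂₁)
      (Hm.toBlocks₁₁ * Sm.toBlocks₁₂ + Hm.toBlocks₁₂ * Sm.toBlocks₂₂) := by
  conv_lhs => rw [OmgC_eq, ← fromBlocks_toBlocks Hm, ← fromBlocks_toBlocks Sm]
  rw [fromBlocks_multiply, fromBlocks_multiply]
  noncomm_ring

theorem statement13 (n : ℕ) (I : Set ℝ) (hI : I.OrdConnected) (h0I : (0 : ℝ) ∈ I)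
    (T : ℝ) (hTI : Set.Ico (0 : ℝ) T ⊆ I)
    (H S : ℝ → Matrix (Fin n ⊕ Fin n) (Fin n ⊕ Fin n) ℂ)
    (hHcont : ∀ i j, ContinuousOn (fun t => H t i j) I)
    (hHsymm : ∀ t ∈ I, (H t)ᵀ = H t)
    (hS : ∀ t ∈ I, ∀ i j,
      HasDerivWithinAt (fun s => S s i j) ((OmgC n * H t * S t) i j) I t)
    (hS0 : S 0 = 1)
    (B₀ : Matrix (Fin n) (Fin n) ℂ) (hB₀symm : B₀ᵀ = B₀) (hB₀im : (matIm B₀).PosDef)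
    (hinv : ∀ t ∈ Set.Ico (0 : ℝ) T,
      IsUnit ((S t).toBlocks₂₁ * B₀ + (S t).toBlocks₂₂))
    (B : ℝ → Matrix (Fin n) (Fin n) ℂ)
    (hB : ∀ t, B t = ((S t).toBlocks₁₁ * B₀ + (S t).toBlocks₁₂) *
      ((S t).toBlocks₂₁ * B₀ + (S t).toBlocks₂₂)⁻¹) :
    B 0 = B₀ ∧
    ∀ t ∈ Set.Ico (0 : ℝ) T, ∀ i j,
      HasDerivWithinAt (fun s => B s i j)
        ((-((H t).toBlocks₂₁ * B t) - B t * (H t).toBlocks₁₂ - (H t).toBlocks₂₂ -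
          B t * (H t).toBlocks₁₁ * B t) i j)
        (Set.Ico (0 : ℝ) T) t := by
  set U : ℝ → Matrix (Fin n) (Fin n) ℂ :=
    fun x => (S x).toBlocks₁₁ * B₀ + (S x).toBlocks₁₂ with hUdef
  set V : ℝ → Matrix (Fin n) (Fin n) ℂ :=
    fun x => (S x).toBlocks₂₁ * B₀ + (S x).toBlocks₂₂ with hVdef
  have hone : (1 : Matrix (Fin n ⊕ Fin n) (Fin n ⊕ Fin n) ℂ) = fromBlocks 1 0 0 1 :=
    (fromBlocks_one).symm
  have e11 : (1 : Matrix (Fin n ⊕ Fin n) (Fin n ⊕ Fin n) ℂ).toBlocks₁₁ = 1 := by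
    conv_lhs => rw [hone]
    exact toBlocks_fromBlocks₁₁ _ _ _ _
  have e12 : (1 : Matrix (Fin n ⊕ Fin n) (Fin n ⊕ Fin n) ℂ).toBlocks₁₂ = 0 := by
    conv_lhs => rw [hone]
    exact toBlocks_fromBlocks₁₂ _ _ _ _
  have e21 : (1 : Matrix (Fin n ⊕ Fin n) (Fin n ⊕ Fin n) ℂ).toBlocks₂₁ = 0 := by
    conv_lhs => rw [hone]
    exact toBlocks_fromBlocks₂₁ _ _ _ _
  have e22 : (1 : Matrix (Fin n ⊕ Fin n) (Fin n ⊕ Fin n) ℂ).toBlocks₂₂ = 1 := by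
    conv_lhs => rw [hone]
    exact toBlocks_fromBlocks₂₂ _ _ _ _
  constructor
  · rw [hB 0, hS0, e11, e12, e21, e22]
    simp
  intro t ht i j
  have htI : t ∈ I := hTI ht
  set Hpp := (H t).toBlocks₁₁
  set Hpq := (H t).toBlocks₁₂
  set Hqp := (H t).toBlocks₂₁
  set Hqq := (H t).toBlocks₂₂
  -- derivatives of the blocks of S
  have hM := omgC_mul_mul n (H t) (S t)
  have h11 : HasDerivWithinAt (fun x => (S x).toBlocks₁₁)
      (-(Hqp * (S t).toBlocks₁₁) - Hqq * (S t).toBlocks₂₁) I t := by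
    refine hasDerivWithinAt_matrix fun a b => ?_
    have := hS t htI (Sum.inl a) (Sum.inl b)
    rwa [hM] at this
  have h12 : HasDerivWithinAt (fun x => (S x).toBlocks₁₂)
      (-(Hqp * (S t).toBlocks₁₂) - Hqq * (S t).toBlocks₂₂) I t := by
    refine hasDerivWithinAt_matrix fun a b => ?_
    have := hS t htI (Sum.inl a) (Sum.inr b)
    rwa [hM] at this
  have h21 : HasDerivWithinAt (fun x => (S x).toBlocks₂₁)
      (Hpp * (S t).toBlocks₁₁ + Hpq * (S t).toBlocks₂₁) I t := by
    refine hasDerivWithinAt_matrix fun a b => ?_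
    have := hS t htI (Sum.inr a) (Sum.inl b)
    rwa [hM] at this
  have h22 : HasDerivWithinAt (fun x => (S x).toBlocks₂₂)
      (Hpp * (S t).toBlocks₁₂ + Hpq * (S t).toBlocks₂₂) I t := by
    refine hasDerivWithinAt_matrix fun a b => ?_
    have := hS t htI (Sum.inr a) (Sum.inr b)
    rwa [hM] at this
  -- derivatives of U and V
  have hUd : HasDerivWithinAt U (-(Hqp * U t) - Hqq * V t) (Set.Ico (0 : ℝ) T) t := by
    have := ((h11.mul_const B₀).add h12).mono hTI
    refine this.congr_deriv ?_
    simp only [hUdef, hVdef]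
    noncomm_ring
  have hVd : HasDerivWithinAt V (Hpp * U t + Hpq * V t) (Set.Ico (0 : ℝ) T) t := by
    have := ((h21.mul_const B₀).add h22).mono hTI
    refine this.congr_deriv ?_
    simp only [hUdef, hVdef]
    noncomm_ring
  have hu : IsUnit (V t) := hinv t ht
  have hVVi : V t * (V t)⁻¹ = 1 :=
    Matrix.mul_nonsing_inv _ ((Matrix.isUnit_iff_isUnit_det _).mp hu)
  -- derivative of the inverse of V
  have hWd : HasDerivWithinAt (fun x => (V x)⁻¹)
      (-((V t)⁻¹ * (Hpp * U t + Hpq * V t) * (V t)⁻¹)) (Set.Ico (0 : ℝ) T) t := by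
    obtain ⟨u, hu'⟩ := hu
    have h1 := hasFDerivAt_ringInverse (𝕜 := ℝ) u
    rw [hu'] at h1
    have h2 := h1.comp_hasDerivWithinAt t hVd
    simp only [Function.comp_def, ← Matrix.nonsing_inv_eq_ringInverse,
      ContinuousLinearMap.neg_apply, ContinuousLinearMap.mulLeftRight_apply,
      Matrix.coe_units_inv, hu'] at h2
    exact h2
  -- derivative of B = U * V⁻¹
  have hBd : HasDerivWithinAt (fun x => U x * (V x)⁻¹)
      ((-(Hqp * U t) - Hqq * V t) * (V t)⁻¹ +
        U t * -((V t)⁻¹ * (Hpp * U t + Hpq * V t) * (V t)⁻¹)) (Set.Ico (0 : ℝ) T) t :=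
    hUd.mul hWd
  have hBt : B t = U t * (V t)⁻¹ := hB t
  have key : (-(Hqp * U t) - Hqq * V t) * (V t)⁻¹ +
      U t * -((V t)⁻¹ * (Hpp * U t + Hpq * V t) * (V t)⁻¹) =
      -(Hqp * B t) - B t * Hpq - Hqq - B t * Hpp * B t := by
    rw [hBt]
    simp only [Matrix.mul_add, Matrix.add_mul, Matrix.sub_mul, Matrix.mul_sub,
      Matrix.neg_mul, Matrix.mul_neg, Matrix.mul_assoc, hVVi, Matrix.mul_one]
    abel
  rw [key] at hBd
  have hfun : ∀ x, B x = U x * (V x)⁻¹ := hB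
  have := hasDerivWithinAt_entry hBd i j
  refine this.congr (fun x _ => ?_) ?_
  · rw [hfun x]
  · rw [hfun t]
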